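/- Let W be a real inner product space with a symmetric positive semidefinite bilinear form d, let c₀ > 0 and τ > 0, let N be a positive integer, let ρ⁰, …, ρ^N ∈ W, and let r₁, …, r_N ≥ 0 be such that for every 1 ≤ n ≤ N, writing δⁿ := (ρⁿ − ρ^{n−1})/τ, c₀·‖δⁿ‖² + d(ρⁿ, δⁿ) ≤ r_n·‖δⁿ‖. Then for every 0 ≤ n ≤ N, d(ρⁿ, ρⁿ) ≤ d(ρ⁰, ρ⁰) + (τ/(2·c₀))·∑_{i=1}^n r_i². -/
import Mathlib


/-- Abstract telescoping estimate behind the fully discrete H¹-type pressure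
error bound (Theorem 4). -/
theorem fully_discrete_pressure_stability
    {W : Type*} [NormedAddCommGroup W] [InnerProductSpace ℝ W]
    (d : W →ₗ[ℝ] W →ₗ[ℝ] ℝ)
    (hd_symm : ∀ q r : W, d q r = d r q)
    (hd_pos : ∀ q : W, 0 ≤ d q q)
    (c₀ : ℝ) (hc₀ : 0 < c₀) (τ : ℝ) (hτ : 0 < τ) (N : ℕ) (hN : 0 < N)
    (ρ : ℕ → W) (r : ℕ → ℝ)
    (hr : ∀ n : ℕ, 1 ≤ n → n ≤ N → 0 ≤ r n)
    (hstep : ∀ n : ℕ, 1 ≤ n → n ≤ N →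
      c₀ * ‖τ⁻¹ • (ρ n - ρ (n - 1))‖ ^ 2 + d (ρ n) (τ⁻¹ • (ρ n - ρ (n - 1)))
        ≤ r n * ‖τ⁻¹ • (ρ n - ρ (n - 1))‖) :
    ∀ n : ℕ, n ≤ N →
      d (ρ n) (ρ n) ≤ d (ρ 0) (ρ 0) + (τ / (2 * c₀)) * ∑ i ∈ Finset.Icc 1 n, r i ^ 2 := by
  intro n
  induction n with
  | zero => intro _; simp
  | succ m ih =>
    intro hmN
    have hm : m ≤ N := Nat.le_of_succ_le hmN
    have ihm := ih hm
    set δ : W := τ⁻¹ • (ρ (m + 1) - ρ m) with hδ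
    have hstep' := hstep (m + 1) (Nat.le_add_left 1 m) hmN
    simp only [Nat.add_sub_cancel] at hstep'
    have hdδ : d (ρ (m + 1)) δ ≤ r (m + 1) ^ 2 / (4 * c₀) := by
      have h1 : r (m + 1) * ‖δ‖ ≤ c₀ * ‖δ‖ ^ 2 + r (m + 1) ^ 2 / (4 * c₀) := by
        have h := sq_nonneg (r (m + 1) - 2 * c₀ * ‖δ‖)
        have hR : r (m + 1) ^ 2 = 4 * c₀ * (r (m + 1) ^ 2 / (4 * c₀)) := by
          field_simp
        nlinarith [h, hc₀, hR]
      linarith [hstep']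
    have hρδ : ρ (m + 1) - ρ m = τ • δ := by
      rw [hδ, smul_smul, mul_inv_cancel₀ (ne_of_gt hτ), one_smul]
    have hkey : d (ρ (m + 1)) (ρ (m + 1)) ≤
        d (ρ m) (ρ m) + τ / (2 * c₀) * r (m + 1) ^ 2 := by
      have hpos := hd_pos (ρ (m + 1) - ρ m)
      have hexp : d (ρ (m + 1) - ρ m) (ρ (m + 1) - ρ m)
          = 2 * d (ρ (m + 1)) (ρ (m + 1) - ρ m) - d (ρ (m + 1)) (ρ (m + 1))
            + d (ρ m) (ρ m) := by
        simp only [map_sub, LinearMap.sub_apply]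
        linarith [hd_symm (ρ (m + 1)) (ρ m)]
      have hsmul : d (ρ (m + 1)) (ρ (m + 1) - ρ m) = τ * d (ρ (m + 1)) δ := by
        rw [hρδ, map_smul]; simp
      have h2 : d (ρ (m + 1)) (ρ (m + 1) - ρ m) ≤ τ * (r (m + 1) ^ 2 / (4 * c₀)) := by
        rw [hsmul]
        exact mul_le_mul_of_nonneg_left hdδ (le_of_lt hτ)
      have h3 : τ / (2 * c₀) * r (m + 1) ^ 2 = 2 * (τ * (r (m + 1) ^ 2 / (4 * c₀))) := by
        field_simp
        ring
      linarith
    have hsum : ∑ i ∈ Finset.Icc 1 (m + 1), r i ^ 2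
        = (∑ i ∈ Finset.Icc 1 m, r i ^ 2) + r (m + 1) ^ 2 := by
      rw [Finset.sum_Icc_succ_top (Nat.le_add_left 1 m)]
    rw [hsum]
    have hnn : 0 ≤ τ / (2 * c₀) := by positivity
    nlinarith
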